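/- The maximal operator V defined from the expressions V_n in the context is bounded from L_∞(G_m × G_m) to L_∞(G_m × G_m): there is a constant c such that ‖Vf‖_∞ ≤ c‖f‖_∞ for all bounded measurable f, because sup_n ∑_{q=0}^{n} ∑_{k=q}^{n} M_q M_k / (M_k M_n) ≤ c. -/

import Mathlib

open Complex Finset

noncomputable section

/-- The generalized number system: `M 0 = 1`, `M (k+1) = m k * M k`. -/
def Mf (m : ℕ → ℕ) : ℕ → ℕ
  | 0 => 1
  | k + 1 => m k * Mf m k

/-- The generalized Rademacher function `r_k(x) = exp(2πi x_k / m_k)`. -/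
def rad (m : ℕ → ℕ) (k : ℕ) (x : ∀ j, ZMod (m j)) : ℂ :=
  Complex.exp (2 * Real.pi * Complex.I * (x k).val / (m k))

/-- The Vilenkin function `ψ_n(x) = ∏ k, r_k(x)^{n_k}` where `n_k = (n / M_k) % m_k`
is the k-th digit of `n` in the generalized number system. -/
def psi (m : ℕ → ℕ) (n : ℕ) (x : ∀ j, ZMod (m j)) : ℂ :=
  ∏ k ∈ Finset.range (n + 1), rad m k x ^ ((n / Mf m k) % m k)

/-- Vilenkin Dirichlet kernel. -/
def Dker (m : ℕ → ℕ) (n : ℕ) (x : ∀ j, ZMod (m j)) : ℂ :=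
  ∑ j ∈ Finset.range n, psi m j x

/-- One-dimensional Vilenkin Fejér kernel. -/
def Fejer (m : ℕ → ℕ) (n : ℕ) (x : ∀ j, ZMod (m j)) : ℂ :=
  (n : ℂ)⁻¹ * ∑ k ∈ Finset.range n, Dker m k x

/-- Two-dimensional Marcinkiewicz–Fejér kernel. -/
def MKer (m : ℕ → ℕ) (n : ℕ) (x y : ∀ j, ZMod (m j)) : ℂ :=
  (n : ℂ)⁻¹ * ∑ k ∈ Finset.range n, Dker m k x * Dker m k y

/-- `e_s ∈ G_m`: the element whose s-th coordinate is 1 and all others are 0. -/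
def evec (m : ℕ → ℕ) (s : ℕ) : ∀ j, ZMod (m j) :=
  fun j => if j = s then 1 else 0

/-- `r_{i,n}(x,y) = ∏_{l=i}^{n} ∑_{s=0}^{m_l-1} ψ_{M_l}(x+y)^s`. -/
def rr (m : ℕ → ℕ) (i n : ℕ) (x y : ∀ j, ZMod (m j)) : ℂ :=
  ∏ l ∈ Finset.Icc i n, ∑ s ∈ Finset.range (m l), psi m (Mf m l) (x + y) ^ s

open MeasureTheory ENNReal NNReal
open scoped Classical

/-- Discrete measurable structure on `ZMod n`. -/
instance (n : ℕ) : MeasurableSpace (ZMod n) := ⊤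

/-- The cylinder set `I_k(z) = {x : x_j = z_j for j < k}`. -/
def cyl (m : ℕ → ℕ) (k : ℕ) (z : ∀ j, ZMod (m j)) : Set (∀ j, ZMod (m j)) :=
  {x | ∀ j < k, x j = z j}

variable (m : ℕ → ℕ)

/-- First term of `V_n`. -/
def V1 (μ : Measure ((∀ j, ZMod (m j)) × (∀ j, ZMod (m j))))
    (n : ℕ) (f : (∀ j, ZMod (m j)) × (∀ j, ZMod (m j)) → ℂ) (x y : ∀ j, ZMod (m j)) : ℂ :=
  ∑ q ∈ Finset.range n, ∑ k ∈ Finset.Icc q (n - 1), ∑ v ∈ Finset.Icc 1 (m q - 1),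
    ((Mf m q : ℂ) * (Mf m k : ℂ) / (m k : ℂ)) *
      ∫ tu in (cyl m k (v • evec m q)) ×ˢ (cyl m k 0),
        f (x - tu.1, y - tu.2) *
          (if ∀ r ∈ Finset.Icc (k + 1) (n - 1), tu.1 r + tu.2 r = 0 then 1 else 0) ∂μ

/-- Second (symmetric) term of `V_n`. -/
def V2 (μ : Measure ((∀ j, ZMod (m j)) × (∀ j, ZMod (m j))))
    (n : ℕ) (f : (∀ j, ZMod (m j)) × (∀ j, ZMod (m j)) → ℂ) (x y : ∀ j, ZMod (m j)) : ℂ :=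
  ∑ q ∈ Finset.range n, ∑ k ∈ Finset.Icc q (n - 1), ∑ v ∈ Finset.Icc 1 (m q - 1),
    ((Mf m q : ℂ) * (Mf m k : ℂ) / (m k : ℂ)) *
      ∫ tu in (cyl m k 0) ×ˢ (cyl m k (v • evec m q)),
        f (x - tu.1, y - tu.2) *
          (if ∀ r ∈ Finset.Icc (k + 1) (n - 1), tu.1 r + tu.2 r = 0 then 1 else 0) ∂μ

/-- Third term of `V_n`. -/
def V3 (μ : Measure ((∀ j, ZMod (m j)) × (∀ j, ZMod (m j))))
    (n : ℕ) (f : (∀ j, ZMod (m j)) × (∀ j, ZMod (m j)) → ℂ) (x y : ∀ j, ZMod (m j)) : ℂ :=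
  ∑ s ∈ Finset.range (n + 1), ∑ i ∈ Finset.Icc s n, ∑ v ∈ Finset.Icc 1 (m s - 1),
    ((Mf m s : ℂ) * (Mf m i : ℂ)) *
      ∫ tu in (cyl m n 0) ×ˢ (cyl m i (v • evec m s)), f (x - tu.1, y - tu.2) ∂μ

/-- Fourth (symmetric) term of `V_n`. -/
def V4 (μ : Measure ((∀ j, ZMod (m j)) × (∀ j, ZMod (m j))))
    (n : ℕ) (f : (∀ j, ZMod (m j)) × (∀ j, ZMod (m j)) → ℂ) (x y : ∀ j, ZMod (m j)) : ℂ :=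
  ∑ s ∈ Finset.range (n + 1), ∑ i ∈ Finset.Icc s n, ∑ v ∈ Finset.Icc 1 (m s - 1),
    ((Mf m s : ℂ) * (Mf m i : ℂ)) *
      ∫ tu in (cyl m i (v • evec m s)) ×ˢ (cyl m n 0), f (x - tu.1, y - tu.2) ∂μ

/-- `V_n = V_n^{(1)} + V_n^{(2)} + V_n^{(3)} + V_n^{(4)}`. -/
def Vop (μ : Measure ((∀ j, ZMod (m j)) × (∀ j, ZMod (m j))))
    (n : ℕ) (f : (∀ j, ZMod (m j)) × (∀ j, ZMod (m j)) → ℂ) (x y : ∀ j, ZMod (m j)) : ℂ :=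
  V1 m μ n f x y + V2 m μ n f x y + V3 m μ n f x y + V4 m μ n f x y

section Aux

variable {m : ℕ → ℕ}

lemma Mf_succ' (m : ℕ → ℕ) (k : ℕ) : Mf m (k+1) = m k * Mf m k := rfl

lemma Mf_pos (hm : ∀ k, 2 ≤ m k) (k : ℕ) : 0 < Mf m k := by
  induction k with
  | zero => simp [Mf]
  | succ k ih =>
      have := hm k
      have : 0 < m k := by omega
      simpa [Mf_succ'] using Nat.mul_pos this ih

lemma Mf_growth (hm : ∀ k, 2 ≤ m k) (q d : ℕ) :
    Mf m q * 2 ^ d ≤ Mf m (q + d) := by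
  induction d with
  | zero => simp
  | succ d ih =>
      have h2 := hm (q + d)
      have hpos := Mf_pos hm (q + d)
      have : Mf m (q + (d+1)) = m (q+d) * Mf m (q+d) := rfl
      rw [this, pow_succ]
      calc Mf m q * (2 ^ d * 2) = (Mf m q * 2 ^ d) * 2 := by ring
        _ ≤ Mf m (q+d) * 2 := Nat.mul_le_mul_right 2 ih
        _ ≤ Mf m (q+d) * m (q+d) := Nat.mul_le_mul_left _ h2
        _ = m (q+d) * Mf m (q+d) := Nat.mul_comm _ _

lemma Mf_ratio (hm : ∀ k, 2 ≤ m k) {q n : ℕ} (h : q ≤ n) :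
    (Mf m q : ℝ) / (Mf m n : ℝ) ≤ (1/2 : ℝ) ^ (n - q) := by
  have hg := Mf_growth (m := m) hm q (n - q)
  rw [Nat.add_sub_cancel' h] at hg
  have hn : (0:ℝ) < (Mf m n : ℝ) := by exact_mod_cast Mf_pos hm n
  rw [div_le_iff₀ hn]
  have : ((Mf m q * 2 ^ (n-q) : ℕ) : ℝ) ≤ (Mf m n : ℝ) := by exact_mod_cast hg
  push_cast at this
  have h2 : (1/2:ℝ)^(n-q) * 2^(n-q) = 1 := by
    rw [← mul_pow]; norm_num
  nlinarith [pow_pos (by norm_num : (0:ℝ) < 1/2) (n - q), pow_pos (by norm_num : (0:ℝ) < 2) (n-q)]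

lemma enn_helper {x y : ℝ≥0∞} (hx0 : x ≠ 0) (hxt : x ≠ ⊤) : x * (x * y)⁻¹ = y⁻¹ := by
  rw [ENNReal.mul_inv (Or.inl hx0) (Or.inl hxt), ← mul_assoc, ENNReal.mul_inv_cancel hx0 hxt,
    one_mul]

end Aux

section Meas

variable {m : ℕ → ℕ} {μ : Measure ((∀ j, ZMod (m j)) × (∀ j, ZMod (m j)))}

/-- Key inductive cylinder/diagonal measure estimate. -/
lemma measQ (hm : ∀ k, 2 ≤ m k)
    (hcyl : ∀ (k : ℕ) (z w : ∀ j, ZMod (m j)),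
      μ ((cyl m k z) ×ˢ (cyl m k w)) = ((Mf m k : ℝ≥0∞) * (Mf m k : ℝ≥0∞))⁻¹) :
    ∀ (d a : ℕ) (z w : ∀ j, ZMod (m j)),
      μ ((cyl m a z ×ˢ cyl m a w) ∩
        {tu : (∀ j, ZMod (m j)) × (∀ j, ZMod (m j)) |
          ∀ r, a ≤ r → r < a + d → tu.1 r + tu.2 r = 0})
      ≤ ((Mf m a : ℝ≥0∞) * (Mf m (a + d) : ℝ≥0∞))⁻¹ := by
  intro d
  induction d with
  | zero =>
      intro a z w
      have hset : {tu : (∀ j, ZMod (m j)) × (∀ j, ZMod (m j)) |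
          ∀ r, a ≤ r → r < a + 0 → tu.1 r + tu.2 r = 0} = Set.univ :=
        Set.eq_univ_iff_forall.2 fun tu r h1 h2 => by omega
      rw [hset, Set.inter_univ, add_zero]
      exact le_of_eq (hcyl a z w)
  | succ d ih =>
      intro a z w
      haveI : NeZero (m a) := ⟨by have := hm a; omega⟩
      set U : ZMod (m a) → Set ((∀ j, ZMod (m j)) × (∀ j, ZMod (m j))) := fun c =>
        (cyl m (a+1) (Function.update z a c) ×ˢ cyl m (a+1) (Function.update w a (-c))) ∩
          {tu | ∀ r, a+1 ≤ r → r < (a+1) + d → tu.1 r + tu.2 r = 0} with hU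
      have hsub : (cyl m a z ×ˢ cyl m a w) ∩
          {tu : (∀ j, ZMod (m j)) × (∀ j, ZMod (m j)) |
            ∀ r, a ≤ r → r < a + (d+1) → tu.1 r + tu.2 r = 0} ⊆ ⋃ c, U c := by
        rintro ⟨t, u⟩ ⟨⟨ht, hu⟩, hT⟩
        refine Set.mem_iUnion.2 ⟨t a, ⟨⟨?_, ?_⟩, ?_⟩⟩
        · intro j hj
          rcases Nat.lt_succ_iff_lt_or_eq.1 hj with hj' | rfl
          · rw [Function.update_of_ne (by omega)]
            exact ht j hj'
          · simp
        · intro j hj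
          rcases Nat.lt_succ_iff_lt_or_eq.1 hj with hj' | rfl
          · rw [Function.update_of_ne (by omega)]
            exact hu j hj'
          · simpa using eq_neg_of_add_eq_zero_right (hT j le_rfl (by omega))
        · intro r h1 h2
          exact hT r (by omega) (by omega)
      have h0 : (m a : ℝ≥0∞) ≠ 0 := Nat.cast_ne_zero.2 (by have := hm a; omega)
      have ht : (m a : ℝ≥0∞) ≠ ⊤ := ENNReal.natCast_ne_top _
      calc μ _ ≤ μ (⋃ c, U c) := measure_mono hsub
        _ ≤ ∑' c, μ (U c) := measure_iUnion_le U
        _ ≤ ∑' _c : ZMod (m a),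
              ((Mf m (a+1) : ℝ≥0∞) * (Mf m ((a+1)+d) : ℝ≥0∞))⁻¹ :=
            ENNReal.tsum_le_tsum fun c => ih (a+1) _ _
        _ = (m a : ℝ≥0∞) * ((Mf m (a+1) : ℝ≥0∞) * (Mf m ((a+1)+d) : ℝ≥0∞))⁻¹ := by
            rw [tsum_fintype, Finset.sum_const, Finset.card_univ, ZMod.card, nsmul_eq_mul]
        _ = ((Mf m a : ℝ≥0∞) * (Mf m (a + (d+1)) : ℝ≥0∞))⁻¹ := by
            have h1 : (a+1) + d = a + (d+1) := by omega
            rw [h1, Mf_succ', Nat.cast_mul, mul_assoc, enn_helper h0 ht]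

end Meas


lemma enn_helper2 {x y : ℝ≥0∞} (hx0 : x ≠ 0) (hxt : x ≠ ⊤) (z : ℝ≥0∞) :
    (x * x) * ((x * y) * z)⁻¹ = x * (y * z)⁻¹ := by
  rw [mul_assoc x y z, mul_assoc x x _, enn_helper hx0 hxt]

section Meas2

variable {m : ℕ → ℕ} {μ : Measure ((∀ j, ZMod (m j)) × (∀ j, ZMod (m j)))}

lemma measQ2 (hm : ∀ k, 2 ≤ m k)
    (hcyl : ∀ (k : ℕ) (z w : ∀ j, ZMod (m j)),
      μ ((cyl m k z) ×ˢ (cyl m k w)) = ((Mf m k : ℝ≥0∞) * (Mf m k : ℝ≥0∞))⁻¹)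
    {k n : ℕ} (hkn : k < n) (z w : ∀ j, ZMod (m j)) :
    μ ((cyl m k z ×ˢ cyl m k w) ∩
      {tu : (∀ j, ZMod (m j)) × (∀ j, ZMod (m j)) |
        ∀ r, k+1 ≤ r → r < n → tu.1 r + tu.2 r = 0})
      ≤ (m k : ℝ≥0∞) * ((Mf m k : ℝ≥0∞) * (Mf m n : ℝ≥0∞))⁻¹ := by
  haveI : NeZero (m k) := ⟨by have := hm k; omega⟩
  obtain ⟨d, rfl⟩ : ∃ d, n = (k+1) + d := ⟨n - (k+1), by omega⟩
  set U : ZMod (m k) × ZMod (m k) → Set ((∀ j, ZMod (m j)) × (∀ j, ZMod (m j))) := fun p =>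
    (cyl m (k+1) (Function.update z k p.1) ×ˢ cyl m (k+1) (Function.update w k p.2)) ∩
      {tu | ∀ r, k+1 ≤ r → r < (k+1) + d → tu.1 r + tu.2 r = 0} with hU
  have hsub : (cyl m k z ×ˢ cyl m k w) ∩
      {tu : (∀ j, ZMod (m j)) × (∀ j, ZMod (m j)) |
        ∀ r, k+1 ≤ r → r < (k+1) + d → tu.1 r + tu.2 r = 0} ⊆ ⋃ p, U p := by
    rintro ⟨t, u⟩ ⟨⟨ht, hu⟩, hT⟩
    refine Set.mem_iUnion.2 ⟨(t k, u k), ⟨⟨?_, ?_⟩, hT⟩⟩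
    · intro j hj
      rcases Nat.lt_succ_iff_lt_or_eq.1 hj with hj' | rfl
      · rw [Function.update_of_ne (by omega)]
        exact ht j hj'
      · simp
    · intro j hj
      rcases Nat.lt_succ_iff_lt_or_eq.1 hj with hj' | rfl
      · rw [Function.update_of_ne (by omega)]
        exact hu j hj'
      · simp
  have h0 : (m k : ℝ≥0∞) ≠ 0 := Nat.cast_ne_zero.2 (by have := hm k; omega)
  have htp : (m k : ℝ≥0∞) ≠ ⊤ := ENNReal.natCast_ne_top _
  calc μ _ ≤ μ (⋃ p, U p) := measure_mono hsub
    _ ≤ ∑' p, μ (U p) := measure_iUnion_le U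
    _ ≤ ∑' _p : ZMod (m k) × ZMod (m k),
          ((Mf m (k+1) : ℝ≥0∞) * (Mf m ((k+1)+d) : ℝ≥0∞))⁻¹ :=
        ENNReal.tsum_le_tsum fun p => measQ hm hcyl d (k+1) _ _
    _ = ((m k : ℝ≥0∞) * (m k : ℝ≥0∞)) *
          ((Mf m (k+1) : ℝ≥0∞) * (Mf m ((k+1)+d) : ℝ≥0∞))⁻¹ := by
        rw [tsum_fintype, Finset.sum_const, Finset.card_univ, Fintype.card_prod, ZMod.card,
          nsmul_eq_mul, Nat.cast_mul]
    _ = (m k : ℝ≥0∞) * ((Mf m k : ℝ≥0∞) * (Mf m ((k+1)+d) : ℝ≥0∞))⁻¹ := by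
        rw [Mf_succ', Nat.cast_mul, enn_helper2 h0 htp]

lemma measQ3 (hm : ∀ k, 2 ≤ m k)
    (hcyl : ∀ (k : ℕ) (z w : ∀ j, ZMod (m j)),
      μ ((cyl m k z) ×ˢ (cyl m k w)) = ((Mf m k : ℝ≥0∞) * (Mf m k : ℝ≥0∞))⁻¹) :
    ∀ (d i : ℕ) (z w : ∀ j, ZMod (m j)),
      μ (cyl m (i+d) z ×ˢ cyl m i w)
        ≤ ((Mf m i : ℝ≥0∞) * (Mf m (i+d) : ℝ≥0∞))⁻¹ := by
  intro d
  induction d with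
  | zero => intro i z w; rw [add_zero]; exact le_of_eq (hcyl i z w)
  | succ d ih =>
      intro i z w
      haveI : NeZero (m i) := ⟨by have := hm i; omega⟩
      have hidx : i + (d+1) = (i+1) + d := by omega
      have hsub : cyl m (i+(d+1)) z ×ˢ cyl m i w ⊆
          ⋃ c : ZMod (m i), cyl m ((i+1)+d) z ×ˢ cyl m (i+1) (Function.update w i c) := by
        rintro ⟨t, u⟩ ⟨ht, hu⟩
        refine Set.mem_iUnion.2 ⟨u i, ⟨?_, ?_⟩⟩
        · intro j hj
          exact ht j (by omega)
        · intro j hj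
          rcases Nat.lt_succ_iff_lt_or_eq.1 hj with hj' | rfl
          · rw [Function.update_of_ne (by omega)]
            exact hu j hj'
          · simp
      have h0 : (m i : ℝ≥0∞) ≠ 0 := Nat.cast_ne_zero.2 (by have := hm i; omega)
      have htp : (m i : ℝ≥0∞) ≠ ⊤ := ENNReal.natCast_ne_top _
      calc μ _ ≤ μ (⋃ c : ZMod (m i),
              cyl m ((i+1)+d) z ×ˢ cyl m (i+1) (Function.update w i c)) := measure_mono hsub
        _ ≤ ∑' c : ZMod (m i), μ (cyl m ((i+1)+d) z ×ˢ cyl m (i+1) (Function.update w i c)) :=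
            measure_iUnion_le _
        _ ≤ ∑' _c : ZMod (m i), ((Mf m (i+1) : ℝ≥0∞) * (Mf m ((i+1)+d) : ℝ≥0∞))⁻¹ :=
            ENNReal.tsum_le_tsum fun c => ih (i+1) _ _
        _ = (m i : ℝ≥0∞) * ((Mf m (i+1) : ℝ≥0∞) * (Mf m ((i+1)+d) : ℝ≥0∞))⁻¹ := by
            rw [tsum_fintype, Finset.sum_const, Finset.card_univ, ZMod.card, nsmul_eq_mul]
        _ = ((Mf m i : ℝ≥0∞) * (Mf m (i + (d+1)) : ℝ≥0∞))⁻¹ := by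
            rw [hidx, Mf_succ', Nat.cast_mul, mul_assoc, enn_helper h0 htp]

lemma measQ4 (hm : ∀ k, 2 ≤ m k)
    (hcyl : ∀ (k : ℕ) (z w : ∀ j, ZMod (m j)),
      μ ((cyl m k z) ×ˢ (cyl m k w)) = ((Mf m k : ℝ≥0∞) * (Mf m k : ℝ≥0∞))⁻¹) :
    ∀ (d i : ℕ) (z w : ∀ j, ZMod (m j)),
      μ (cyl m i w ×ˢ cyl m (i+d) z)
        ≤ ((Mf m i : ℝ≥0∞) * (Mf m (i+d) : ℝ≥0∞))⁻¹ := by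
  intro d
  induction d with
  | zero => intro i z w; rw [add_zero]; exact le_of_eq (hcyl i w z)
  | succ d ih =>
      intro i z w
      haveI : NeZero (m i) := ⟨by have := hm i; omega⟩
      have hidx : i + (d+1) = (i+1) + d := by omega
      have hsub : cyl m i w ×ˢ cyl m (i+(d+1)) z ⊆
          ⋃ c : ZMod (m i), cyl m (i+1) (Function.update w i c) ×ˢ cyl m ((i+1)+d) z := by
        rintro ⟨t, u⟩ ⟨ht, hu⟩
        refine Set.mem_iUnion.2 ⟨t i, ⟨?_, ?_⟩⟩
        · intro j hj
          rcases Nat.lt_succ_iff_lt_or_eq.1 hj with hj' | rfl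
          · rw [Function.update_of_ne (by omega)]
            exact ht j hj'
          · simp
        · intro j hj
          exact hu j (by omega)
      have h0 : (m i : ℝ≥0∞) ≠ 0 := Nat.cast_ne_zero.2 (by have := hm i; omega)
      have htp : (m i : ℝ≥0∞) ≠ ⊤ := ENNReal.natCast_ne_top _
      calc μ _ ≤ μ (⋃ c : ZMod (m i),
              cyl m (i+1) (Function.update w i c) ×ˢ cyl m ((i+1)+d) z) := measure_mono hsub
        _ ≤ ∑' c : ZMod (m i), μ (cyl m (i+1) (Function.update w i c) ×ˢ cyl m ((i+1)+d) z) :=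
            measure_iUnion_le _
        _ ≤ ∑' _c : ZMod (m i), ((Mf m (i+1) : ℝ≥0∞) * (Mf m ((i+1)+d) : ℝ≥0∞))⁻¹ :=
            ENNReal.tsum_le_tsum fun c => ih (i+1) _ _
        _ = (m i : ℝ≥0∞) * ((Mf m (i+1) : ℝ≥0∞) * (Mf m ((i+1)+d) : ℝ≥0∞))⁻¹ := by
            rw [tsum_fintype, Finset.sum_const, Finset.card_univ, ZMod.card, nsmul_eq_mul]
        _ = ((Mf m i : ℝ≥0∞) * (Mf m (i + (d+1)) : ℝ≥0∞))⁻¹ := by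
            rw [hidx, Mf_succ', Nat.cast_mul, mul_assoc, enn_helper h0 htp]

lemma measT (hm : ∀ k, 2 ≤ m k) (a n : ℕ) :
    MeasurableSet {tu : (∀ j, ZMod (m j)) × (∀ j, ZMod (m j)) |
      ∀ r, a ≤ r → r < n → tu.1 r + tu.2 r = 0} := by
  have hrw : {tu : (∀ j, ZMod (m j)) × (∀ j, ZMod (m j)) |
      ∀ r, a ≤ r → r < n → tu.1 r + tu.2 r = 0}
      = ⋂ r : ℕ, {tu : (∀ j, ZMod (m j)) × (∀ j, ZMod (m j)) |
          a ≤ r → r < n → tu.1 r + tu.2 r = 0} := by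
    ext tu; simp [Set.mem_iInter]
  rw [hrw]
  refine MeasurableSet.iInter fun r => ?_
  by_cases h : a ≤ r ∧ r < n
  · haveI : NeZero (m r) := ⟨by have := hm r; omega⟩
    have he : {tu : (∀ j, ZMod (m j)) × (∀ j, ZMod (m j)) |
        a ≤ r → r < n → tu.1 r + tu.2 r = 0}
        = ⋃ c : ZMod (m r),
            ((fun t : ∀ j, ZMod (m j) => t r) ⁻¹' {c}) ×ˢ
              ((fun u : ∀ j, ZMod (m j) => u r) ⁻¹' {-c}) := by
      ext ⟨t, u⟩
      simp only [Set.mem_setOf_eq, Set.mem_iUnion, Set.mem_prod, Set.mem_preimage,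
        Set.mem_singleton_iff]
      constructor
      · intro h'
        exact ⟨t r, rfl, eq_neg_of_add_eq_zero_right (h' h.1 h.2)⟩
      · rintro ⟨c, rfl, h2⟩ _ _
        rw [h2]; exact add_neg_cancel _
    rw [he]
    exact MeasurableSet.iUnion fun c =>
      ((measurable_pi_apply r) MeasurableSpace.measurableSet_top).prod
        ((measurable_pi_apply r) MeasurableSpace.measurableSet_top)
  · have he : {tu : (∀ j, ZMod (m j)) × (∀ j, ZMod (m j)) |
        a ≤ r → r < n → tu.1 r + tu.2 r = 0} = Set.univ :=
      Set.eq_univ_iff_forall.2 fun tu h1 h2 => absurd ⟨h1, h2⟩ h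
    rw [he]
    exact MeasurableSet.univ

lemma norm_setIntegral_le'' {α : Type*} [MeasurableSpace α] (μ : Measure α) [IsFiniteMeasure μ]
    (S : Set α) (g : α → ℂ) {C : ℝ} (hC : ∀ z, ‖g z‖ ≤ C) :
    ‖∫ z in S, g z ∂μ‖ ≤ C * (μ S).toReal := by
  have h := norm_integral_le_of_norm_le_const (μ := μ.restrict S) (f := g)
    (Filter.Eventually.of_forall hC)
  simpa [Measure.restrict_apply_univ, Measure.real] using h

end Meas2

section Terms

variable {m : ℕ → ℕ} {μ : Measure ((∀ j, ZMod (m j)) × (∀ j, ZMod (m j)))}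

lemma term12 (hm : ∀ k, 2 ≤ m k) [IsProbabilityMeasure μ]
    (hcyl : ∀ (k : ℕ) (z w : ∀ j, ZMod (m j)),
      μ ((cyl m k z) ×ˢ (cyl m k w)) = ((Mf m k : ℝ≥0∞) * (Mf m k : ℝ≥0∞))⁻¹)
    {k n : ℕ} (hkn : k < n) (q : ℕ)
    (f : (∀ j, ZMod (m j)) × (∀ j, ZMod (m j)) → ℂ) {C : ℝ} (hf : ∀ z, ‖f z‖ ≤ C)
    (x y z w : ∀ j, ZMod (m j)) :
    ‖((Mf m q : ℂ) * (Mf m k : ℂ) / (m k : ℂ)) *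
      ∫ tu in (cyl m k z) ×ˢ (cyl m k w),
        f (x - tu.1, y - tu.2) *
          (if ∀ r ∈ Finset.Icc (k + 1) (n - 1), tu.1 r + tu.2 r = 0 then 1 else 0) ∂μ‖
      ≤ C * ((Mf m q : ℝ) / (Mf m n : ℝ)) := by
  set T := {tu : (∀ j, ZMod (m j)) × (∀ j, ZMod (m j)) |
    ∀ r, k+1 ≤ r → r < n → tu.1 r + tu.2 r = 0} with hT
  have hC0 : 0 ≤ C := le_trans (norm_nonneg _) (hf 0)
  have hTm := measT (m := m) hm (k+1) n
  have hrw : (fun tu : (∀ j, ZMod (m j)) × (∀ j, ZMod (m j)) =>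
      f (x - tu.1, y - tu.2) *
        (if ∀ r ∈ Finset.Icc (k + 1) (n - 1), tu.1 r + tu.2 r = 0 then (1:ℂ) else 0))
      = T.indicator (fun tu => f (x - tu.1, y - tu.2)) := by
    funext tu
    have hiff : (∀ r ∈ Finset.Icc (k + 1) (n - 1), tu.1 r + tu.2 r = 0) ↔ tu ∈ T := by
      constructor
      · intro h r h1 h2
        exact h r (Finset.mem_Icc.2 ⟨h1, by omega⟩)
      · intro h r hr
        rcases Finset.mem_Icc.1 hr with ⟨h1, h2⟩
        exact h r h1 (by omega)
    rw [Set.indicator_apply]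
    by_cases h : tu ∈ T
    · rw [if_pos (hiff.2 h), if_pos h, mul_one]
    · rw [if_neg (fun hh => h (hiff.1 hh)), if_neg h, mul_zero]
  rw [show (∫ tu in (cyl m k z) ×ˢ (cyl m k w),
        f (x - tu.1, y - tu.2) *
          (if ∀ r ∈ Finset.Icc (k + 1) (n - 1), tu.1 r + tu.2 r = 0 then (1:ℂ) else 0) ∂μ)
      = ∫ tu in ((cyl m k z) ×ˢ (cyl m k w)) ∩ T, f (x - tu.1, y - tu.2) ∂μ by
    rw [← setIntegral_indicator hTm]
    exact congrArg _ hrw]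
  rw [norm_mul]
  have hmk : 0 < m k := by have := hm k; omega
  have hMkp : (0:ℝ) < Mf m k := by exact_mod_cast Mf_pos hm k
  have hMnp : (0:ℝ) < Mf m n := by exact_mod_cast Mf_pos hm n
  have hMqp : (0:ℝ) < Mf m q := by exact_mod_cast Mf_pos hm q
  have hmkR : (0:ℝ) < m k := by exact_mod_cast hmk
  have hcoef : ‖((Mf m q : ℂ) * (Mf m k : ℂ) / (m k : ℂ))‖
      = (Mf m q : ℝ) * (Mf m k : ℝ) / (m k : ℝ) := by
    rw [norm_div, norm_mul, Complex.norm_natCast, Complex.norm_natCast, Complex.norm_natCast]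
  have hint : ‖∫ tu in ((cyl m k z) ×ˢ (cyl m k w)) ∩ T, f (x - tu.1, y - tu.2) ∂μ‖
      ≤ C * (μ (((cyl m k z) ×ˢ (cyl m k w)) ∩ T)).toReal :=
    norm_setIntegral_le'' μ _ _ (fun tu => hf _)
  have hmeas := measQ2 (μ := μ) hm hcyl hkn z w
  have hne0 : ((Mf m k : ℝ≥0∞) * (Mf m n : ℝ≥0∞)) ≠ 0 :=
    mul_ne_zero (Nat.cast_ne_zero.2 (Mf_pos hm k).ne') (Nat.cast_ne_zero.2 (Mf_pos hm n).ne')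
  have htopb : (m k : ℝ≥0∞) * ((Mf m k : ℝ≥0∞) * (Mf m n : ℝ≥0∞))⁻¹ ≠ ⊤ :=
    ENNReal.mul_ne_top (ENNReal.natCast_ne_top _) (ENNReal.inv_ne_top.2 hne0)
  have hto : (μ (((cyl m k z) ×ˢ (cyl m k w)) ∩ T)).toReal
      ≤ (m k : ℝ) * ((Mf m k : ℝ) * (Mf m n : ℝ))⁻¹ := by
    have h1 := ENNReal.toReal_mono htopb hmeas
    rwa [ENNReal.toReal_mul, ENNReal.toReal_inv, ENNReal.toReal_mul, ENNReal.toReal_natCast,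
      ENNReal.toReal_natCast, ENNReal.toReal_natCast] at h1
  have h2 : ‖∫ tu in ((cyl m k z) ×ˢ (cyl m k w)) ∩ T, f (x - tu.1, y - tu.2) ∂μ‖
      ≤ C * ((m k : ℝ) * ((Mf m k : ℝ) * (Mf m n : ℝ))⁻¹) :=
    le_trans hint (mul_le_mul_of_nonneg_left hto hC0)
  rw [hcoef]
  calc (Mf m q : ℝ) * (Mf m k : ℝ) / (m k : ℝ) * ‖_‖
      ≤ (Mf m q : ℝ) * (Mf m k : ℝ) / (m k : ℝ) *
          (C * ((m k : ℝ) * ((Mf m k : ℝ) * (Mf m n : ℝ))⁻¹)) :=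
        mul_le_mul_of_nonneg_left h2 (by positivity)
    _ = C * ((Mf m q : ℝ) / (Mf m n : ℝ)) := by
        field_simp

lemma term34 [IsProbabilityMeasure μ] (hm : ∀ k, 2 ≤ m k)
    {i n : ℕ} (s : ℕ) {A Bs : Set (∀ j, ZMod (m j))}
    (hmeas : μ (A ×ˢ Bs) ≤ ((Mf m i : ℝ≥0∞) * (Mf m n : ℝ≥0∞))⁻¹)
    (f : (∀ j, ZMod (m j)) × (∀ j, ZMod (m j)) → ℂ) {C : ℝ} (hf : ∀ z, ‖f z‖ ≤ C)
    (x y : ∀ j, ZMod (m j)) :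
    ‖((Mf m s : ℂ) * (Mf m i : ℂ)) * ∫ tu in A ×ˢ Bs, f (x - tu.1, y - tu.2) ∂μ‖
      ≤ C * ((Mf m s : ℝ) / (Mf m n : ℝ)) := by
  have hC0 : 0 ≤ C := le_trans (norm_nonneg _) (hf 0)
  have hMip : (0:ℝ) < Mf m i := by exact_mod_cast Mf_pos hm i
  have hMnp : (0:ℝ) < Mf m n := by exact_mod_cast Mf_pos hm n
  have hMsp : (0:ℝ) < Mf m s := by exact_mod_cast Mf_pos hm s
  have hne0 : ((Mf m i : ℝ≥0∞) * (Mf m n : ℝ≥0∞)) ≠ 0 :=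
    mul_ne_zero (Nat.cast_ne_zero.2 (Mf_pos hm i).ne') (Nat.cast_ne_zero.2 (Mf_pos hm n).ne')
  have htopb : ((Mf m i : ℝ≥0∞) * (Mf m n : ℝ≥0∞))⁻¹ ≠ ⊤ := ENNReal.inv_ne_top.2 hne0
  have hto : (μ (A ×ˢ Bs)).toReal ≤ ((Mf m i : ℝ) * (Mf m n : ℝ))⁻¹ := by
    have h1 := ENNReal.toReal_mono htopb hmeas
    rwa [ENNReal.toReal_inv, ENNReal.toReal_mul, ENNReal.toReal_natCast,
      ENNReal.toReal_natCast] at h1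
  have hint : ‖∫ tu in A ×ˢ Bs, f (x - tu.1, y - tu.2) ∂μ‖
      ≤ C * (μ (A ×ˢ Bs)).toReal :=
    norm_setIntegral_le'' μ _ _ (fun tu => hf _)
  have h2 : ‖∫ tu in A ×ˢ Bs, f (x - tu.1, y - tu.2) ∂μ‖
      ≤ C * ((Mf m i : ℝ) * (Mf m n : ℝ))⁻¹ :=
    le_trans hint (mul_le_mul_of_nonneg_left hto hC0)
  rw [norm_mul]
  have hcoef : ‖((Mf m s : ℂ) * (Mf m i : ℂ))‖ = (Mf m s : ℝ) * (Mf m i : ℝ) := by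
    rw [norm_mul, Complex.norm_natCast, Complex.norm_natCast]
  rw [hcoef]
  calc (Mf m s : ℝ) * (Mf m i : ℝ) * ‖_‖
      ≤ (Mf m s : ℝ) * (Mf m i : ℝ) * (C * ((Mf m i : ℝ) * (Mf m n : ℝ))⁻¹) :=
        mul_le_mul_of_nonneg_left h2 (by positivity)
    _ = C * ((Mf m s : ℝ) / (Mf m n : ℝ)) := by
        field_simp

end Terms

section Sums

lemma natle2 : ∀ j : ℕ, (j : ℝ) ≤ 2 * (3/2) ^ j := by
  intro j
  induction j with
  | zero => norm_num
  | succ j ih =>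
      have hp : (1:ℝ) ≤ (3/2) ^ j := one_le_pow₀ (by norm_num)
      push_cast
      rw [pow_succ]
      nlinarith

lemma jpow : ∀ j : ℕ, (j : ℝ) * (1/2) ^ j ≤ 2 * (3/4) ^ j := by
  intro j
  have h1 : ((3:ℝ)/2) ^ j * (1/2) ^ j = (3/4) ^ j := by
    rw [← mul_pow]; norm_num
  have h2 := natle2 j
  have hp : (0:ℝ) < (1/2) ^ j := pow_pos (by norm_num) j
  calc (j:ℝ) * (1/2) ^ j ≤ (2 * (3/2) ^ j) * (1/2) ^ j :=
        mul_le_mul_of_nonneg_right h2 hp.le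
    _ = 2 * (3/4) ^ j := by rw [mul_assoc, h1]

lemma jpow1 : ∀ j : ℕ, ((j : ℝ) + 1) * (1/2) ^ j ≤ 3 * (3/4) ^ j := by
  intro j
  have h1 := jpow j
  have hp : ((1:ℝ)/2) ^ j ≤ (3/4) ^ j :=
    pow_le_pow_left₀ (by norm_num) (by norm_num) j
  nlinarith

lemma geom34 : ∀ n : ℕ, ∑ q ∈ Finset.range n, (3/4 : ℝ) ^ (n - q) ≤ 3 := by
  intro n
  induction n with
  | zero => simp
  | succ n ih =>
      rw [Finset.sum_range_succ]
      have h1 : ∑ q ∈ Finset.range n, (3/4 : ℝ) ^ (n + 1 - q)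
          = (3/4) * ∑ q ∈ Finset.range n, (3/4 : ℝ) ^ (n - q) := by
        rw [Finset.mul_sum]
        refine Finset.sum_congr rfl fun q hq => ?_
        have hq' := Finset.mem_range.1 hq
        have : n + 1 - q = (n - q) + 1 := by omega
        rw [this, pow_succ]; ring
      have h2 : n + 1 - n = 1 := by omega
      rw [h2, h1]
      nlinarith

lemma geom340 : ∀ n : ℕ, ∑ s ∈ Finset.range (n+1), (3/4 : ℝ) ^ (n - s) ≤ 4 := by
  intro n
  have h := geom34 (n+1)
  rw [Finset.sum_range_succ] at h
  have h1 : ∑ q ∈ Finset.range n, (3/4 : ℝ) ^ (n + 1 - q)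
      = (3/4) * ∑ q ∈ Finset.range n, (3/4 : ℝ) ^ (n - q) := by
    rw [Finset.mul_sum]
    refine Finset.sum_congr rfl fun q hq => ?_
    have hq' := Finset.mem_range.1 hq
    have : n + 1 - q = (n - q) + 1 := by omega
    rw [this, pow_succ]; ring
  rw [Finset.sum_range_succ]
  have h2 : n - n = 0 := by omega
  rw [h2]
  have h3 : ∑ q ∈ Finset.range n, (3/4 : ℝ) ^ (n - q) ≤ 3 := geom34 n
  norm_num
  nlinarith

end Sums

/-- The maximal operator `V` is bounded from `L_∞` to `L_∞`: the supremum over `n`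
of `|V_n f|` is dominated by a constant multiple of the uniform bound of `f`. -/
theorem stmt11 (hm : ∀ k, 2 ≤ m k) (B : ℕ) (hB : ∀ k, m k ≤ B)
    (μ : Measure ((∀ j, ZMod (m j)) × (∀ j, ZMod (m j)))) [IsProbabilityMeasure μ]
    (hinv : ∀ (z : (∀ j, ZMod (m j)) × (∀ j, ZMod (m j)))
      (s : Set ((∀ j, ZMod (m j)) × (∀ j, ZMod (m j)))), μ ((fun w => z + w) ⁻¹' s) = μ s)
    (hcyl : ∀ (k : ℕ) (z w : ∀ j, ZMod (m j)),
      μ ((cyl m k z) ×ˢ (cyl m k w)) = ((Mf m k : ℝ≥0∞) * (Mf m k : ℝ≥0∞))⁻¹) :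
    ∃ c : ℝ, 0 < c ∧ ∀ (f : (∀ j, ZMod (m j)) × (∀ j, ZMod (m j)) → ℂ) (C : ℝ),
      Measurable f → (∀ z, ‖f z‖ ≤ C) →
      ∀ (n : ℕ) (x y : ∀ j, ZMod (m j)), ‖Vop m μ n f x y‖ ≤ c * C := by
  refine ⟨36 * (B:ℝ) + 1, by positivity, ?_⟩
  intro f C hfm hf n x y
  have hC0 : 0 ≤ C := le_trans (norm_nonneg _) (hf 0)
  have hBC : (0:ℝ) ≤ (B:ℝ) * C := by positivity
  have hV1 : ‖V1 m μ n f x y‖ ≤ 6 * (B:ℝ) * C := by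
    rw [V1]
    refine le_trans (norm_sum_le _ _) ?_
    refine le_trans (Finset.sum_le_sum
      (g := fun q => (B:ℝ) * C * (2 * (3/4:ℝ) ^ (n - q))) ?_) ?_
    · intro q hq
      have hq' := Finset.mem_range.1 hq
      refine le_trans (norm_sum_le _ _) ?_
      refine le_trans (Finset.sum_le_card_nsmul _ _
        ((B:ℝ) * (C * ((Mf m q : ℝ) / (Mf m n : ℝ)))) ?_) ?_
      · intro k hk
        rcases Finset.mem_Icc.1 hk with ⟨hqk, hkn'⟩
        have hkn : k < n := by omega
        refine le_trans (norm_sum_le _ _) ?_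
        refine le_trans (Finset.sum_le_card_nsmul _ _
          (C * ((Mf m q : ℝ) / (Mf m n : ℝ))) ?_) ?_
        · intro v hv
          exact term12 hm hcyl hkn q f hf x y _ _
        · rw [nsmul_eq_mul, Nat.card_Icc]
          have hcard : ((m q - 1 + 1 - 1 : ℕ) : ℝ) ≤ (B:ℝ) := by
            have := hB q; exact_mod_cast by omega
          exact mul_le_mul_of_nonneg_right hcard (by positivity)
      · rw [nsmul_eq_mul, Nat.card_Icc]
        have hc : n - 1 + 1 - q = n - q := by omega
        rw [hc]
        have hr := Mf_ratio (m := m) hm hq'.le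
        calc ((n - q : ℕ) : ℝ) * ((B:ℝ) * (C * ((Mf m q : ℝ) / (Mf m n : ℝ))))
            ≤ ((n - q : ℕ) : ℝ) * ((B:ℝ) * (C * (1/2:ℝ) ^ (n - q))) := by gcongr
          _ = (B:ℝ) * C * (((n - q : ℕ) : ℝ) * (1/2:ℝ) ^ (n - q)) := by ring
          _ ≤ (B:ℝ) * C * (2 * (3/4:ℝ) ^ (n - q)) :=
              mul_le_mul_of_nonneg_left (jpow _) hBC
    · calc ∑ q ∈ Finset.range n, (B:ℝ) * C * (2 * (3/4:ℝ) ^ (n - q))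
          = (B:ℝ) * C * 2 * ∑ q ∈ Finset.range n, (3/4:ℝ) ^ (n - q) := by
            rw [Finset.mul_sum]; exact Finset.sum_congr rfl fun q _ => by ring
        _ ≤ (B:ℝ) * C * 2 * 3 := mul_le_mul_of_nonneg_left (geom34 n) (by positivity)
        _ = 6 * (B:ℝ) * C := by ring
  have hV2 : ‖V2 m μ n f x y‖ ≤ 6 * (B:ℝ) * C := by
    rw [V2]
    refine le_trans (norm_sum_le _ _) ?_
    refine le_trans (Finset.sum_le_sum
      (g := fun q => (B:ℝ) * C * (2 * (3/4:ℝ) ^ (n - q))) ?_) ?_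
    · intro q hq
      have hq' := Finset.mem_range.1 hq
      refine le_trans (norm_sum_le _ _) ?_
      refine le_trans (Finset.sum_le_card_nsmul _ _
        ((B:ℝ) * (C * ((Mf m q : ℝ) / (Mf m n : ℝ)))) ?_) ?_
      · intro k hk
        rcases Finset.mem_Icc.1 hk with ⟨hqk, hkn'⟩
        have hkn : k < n := by omega
        refine le_trans (norm_sum_le _ _) ?_
        refine le_trans (Finset.sum_le_card_nsmul _ _
          (C * ((Mf m q : ℝ) / (Mf m n : ℝ))) ?_) ?_
        · intro v hv
          exact term12 hm hcyl hkn q f hf x y _ _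
        · rw [nsmul_eq_mul, Nat.card_Icc]
          have hcard : ((m q - 1 + 1 - 1 : ℕ) : ℝ) ≤ (B:ℝ) := by
            have := hB q; exact_mod_cast by omega
          exact mul_le_mul_of_nonneg_right hcard (by positivity)
      · rw [nsmul_eq_mul, Nat.card_Icc]
        have hc : n - 1 + 1 - q = n - q := by omega
        rw [hc]
        have hr := Mf_ratio (m := m) hm hq'.le
        calc ((n - q : ℕ) : ℝ) * ((B:ℝ) * (C * ((Mf m q : ℝ) / (Mf m n : ℝ))))
            ≤ ((n - q : ℕ) : ℝ) * ((B:ℝ) * (C * (1/2:ℝ) ^ (n - q))) := by gcongr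
          _ = (B:ℝ) * C * (((n - q : ℕ) : ℝ) * (1/2:ℝ) ^ (n - q)) := by ring
          _ ≤ (B:ℝ) * C * (2 * (3/4:ℝ) ^ (n - q)) :=
              mul_le_mul_of_nonneg_left (jpow _) hBC
    · calc ∑ q ∈ Finset.range n, (B:ℝ) * C * (2 * (3/4:ℝ) ^ (n - q))
          = (B:ℝ) * C * 2 * ∑ q ∈ Finset.range n, (3/4:ℝ) ^ (n - q) := by
            rw [Finset.mul_sum]; exact Finset.sum_congr rfl fun q _ => by ring
        _ ≤ (B:ℝ) * C * 2 * 3 := mul_le_mul_of_nonneg_left (geom34 n) (by positivity)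
        _ = 6 * (B:ℝ) * C := by ring
  have hV3 : ‖V3 m μ n f x y‖ ≤ 12 * (B:ℝ) * C := by
    rw [V3]
    refine le_trans (norm_sum_le _ _) ?_
    refine le_trans (Finset.sum_le_sum
      (g := fun s => (B:ℝ) * C * (3 * (3/4:ℝ) ^ (n - s))) ?_) ?_
    · intro s hs
      have hs' : s ≤ n := by have := Finset.mem_range.1 hs; omega
      refine le_trans (norm_sum_le _ _) ?_
      refine le_trans (Finset.sum_le_card_nsmul _ _
        ((B:ℝ) * (C * ((Mf m s : ℝ) / (Mf m n : ℝ)))) ?_) ?_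
      · intro i hi
        rcases Finset.mem_Icc.1 hi with ⟨hsi, hin⟩
        refine le_trans (norm_sum_le _ _) ?_
        refine le_trans (Finset.sum_le_card_nsmul _ _
          (C * ((Mf m s : ℝ) / (Mf m n : ℝ))) ?_) ?_
        · intro v hv
          have hmeas : μ ((cyl m n 0) ×ˢ (cyl m i (v • evec m s)))
              ≤ ((Mf m i : ℝ≥0∞) * (Mf m n : ℝ≥0∞))⁻¹ := by
            obtain ⟨d, rfl⟩ : ∃ d, n = i + d := ⟨n - i, by omega⟩
            exact measQ3 hm hcyl d i _ _
          exact term34 (μ := μ) hm s hmeas f hf x y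
        · rw [nsmul_eq_mul, Nat.card_Icc]
          have hcard : ((m s - 1 + 1 - 1 : ℕ) : ℝ) ≤ (B:ℝ) := by
            have := hB s; exact_mod_cast by omega
          exact mul_le_mul_of_nonneg_right hcard (by positivity)
      · rw [nsmul_eq_mul, Nat.card_Icc]
        have hc : n + 1 - s = (n - s) + 1 := by omega
        rw [hc]
        have hr := Mf_ratio (m := m) hm hs'
        calc (((n - s) + 1 : ℕ) : ℝ) * ((B:ℝ) * (C * ((Mf m s : ℝ) / (Mf m n : ℝ))))
            ≤ (((n - s) + 1 : ℕ) : ℝ) * ((B:ℝ) * (C * (1/2:ℝ) ^ (n - s))) := by gcongr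
          _ = (B:ℝ) * C * ((((n - s : ℕ) : ℝ) + 1) * (1/2:ℝ) ^ (n - s)) := by
              push_cast; ring
          _ ≤ (B:ℝ) * C * (3 * (3/4:ℝ) ^ (n - s)) :=
              mul_le_mul_of_nonneg_left (jpow1 _) hBC
    · calc ∑ s ∈ Finset.range (n+1), (B:ℝ) * C * (3 * (3/4:ℝ) ^ (n - s))
          = (B:ℝ) * C * 3 * ∑ s ∈ Finset.range (n+1), (3/4:ℝ) ^ (n - s) := by
            rw [Finset.mul_sum]; exact Finset.sum_congr rfl fun s _ => by ring
        _ ≤ (B:ℝ) * C * 3 * 4 := mul_le_mul_of_nonneg_left (geom340 n) (by positivity)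
        _ = 12 * (B:ℝ) * C := by ring
  have hV4 : ‖V4 m μ n f x y‖ ≤ 12 * (B:ℝ) * C := by
    rw [V4]
    refine le_trans (norm_sum_le _ _) ?_
    refine le_trans (Finset.sum_le_sum
      (g := fun s => (B:ℝ) * C * (3 * (3/4:ℝ) ^ (n - s))) ?_) ?_
    · intro s hs
      have hs' : s ≤ n := by have := Finset.mem_range.1 hs; omega
      refine le_trans (norm_sum_le _ _) ?_
      refine le_trans (Finset.sum_le_card_nsmul _ _
        ((B:ℝ) * (C * ((Mf m s : ℝ) / (Mf m n : ℝ)))) ?_) ?_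
      · intro i hi
        rcases Finset.mem_Icc.1 hi with ⟨hsi, hin⟩
        refine le_trans (norm_sum_le _ _) ?_
        refine le_trans (Finset.sum_le_card_nsmul _ _
          (C * ((Mf m s : ℝ) / (Mf m n : ℝ))) ?_) ?_
        · intro v hv
          have hmeas : μ ((cyl m i (v • evec m s)) ×ˢ (cyl m n 0))
              ≤ ((Mf m i : ℝ≥0∞) * (Mf m n : ℝ≥0∞))⁻¹ := by
            obtain ⟨d, rfl⟩ : ∃ d, n = i + d := ⟨n - i, by omega⟩
            exact measQ4 hm hcyl d i _ _
          exact term34 (μ := μ) hm s hmeas f hf x y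
        · rw [nsmul_eq_mul, Nat.card_Icc]
          have hcard : ((m s - 1 + 1 - 1 : ℕ) : ℝ) ≤ (B:ℝ) := by
            have := hB s; exact_mod_cast by omega
          exact mul_le_mul_of_nonneg_right hcard (by positivity)
      · rw [nsmul_eq_mul, Nat.card_Icc]
        have hc : n + 1 - s = (n - s) + 1 := by omega
        rw [hc]
        have hr := Mf_ratio (m := m) hm hs'
        calc (((n - s) + 1 : ℕ) : ℝ) * ((B:ℝ) * (C * ((Mf m s : ℝ) / (Mf m n : ℝ))))
            ≤ (((n - s) + 1 : ℕ) : ℝ) * ((B:ℝ) * (C * (1/2:ℝ) ^ (n - s))) := by gcongr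
          _ = (B:ℝ) * C * ((((n - s : ℕ) : ℝ) + 1) * (1/2:ℝ) ^ (n - s)) := by
              push_cast; ring
          _ ≤ (B:ℝ) * C * (3 * (3/4:ℝ) ^ (n - s)) :=
              mul_le_mul_of_nonneg_left (jpow1 _) hBC
    · calc ∑ s ∈ Finset.range (n+1), (B:ℝ) * C * (3 * (3/4:ℝ) ^ (n - s))
          = (B:ℝ) * C * 3 * ∑ s ∈ Finset.range (n+1), (3/4:ℝ) ^ (n - s) := by
            rw [Finset.mul_sum]; exact Finset.sum_congr rfl fun s _ => by ring
        _ ≤ (B:ℝ) * C * 3 * 4 := mul_le_mul_of_nonneg_left (geom340 n) (by positivity)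
        _ = 12 * (B:ℝ) * C := by ring
  rw [Vop]
  calc ‖V1 m μ n f x y + V2 m μ n f x y + V3 m μ n f x y + V4 m μ n f x y‖
      ≤ ‖V1 m μ n f x y + V2 m μ n f x y + V3 m μ n f x y‖ + ‖V4 m μ n f x y‖ :=
        norm_add_le _ _
    _ ≤ (‖V1 m μ n f x y + V2 m μ n f x y‖ + ‖V3 m μ n f x y‖) + ‖V4 m μ n f x y‖ :=
        add_le_add_left (norm_add_le _ _) _
    _ ≤ ((‖V1 m μ n f x y‖ + ‖V2 m μ n f x y‖) + ‖V3 m μ n f x y‖) + ‖V4 m μ n f x y‖ :=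
        add_le_add_left (add_le_add_left (norm_add_le _ _) _) _
    _ ≤ (36 * (B:ℝ) + 1) * C := by nlinarith [hV1, hV2, hV3, hV4, hC0]
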